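/- Let a < b, let n ∈ ℕ with n ≥ 2, let α : [a,b]×[a,b] → (0, 1−1/n) and β : [a,b]×[a,b] → (1/n, 1). Let h₂, h₅ : [a,b] → ℝ be continuous; let h₃ : [a,b] → ℝ be differentiable with continuous derivative; let h₄ : [a,b] → ℝ be continuous such that t ↦ (ₜI^{1−α}_b h₄)(t) is absolutely continuous with continuous derivative. Then for every η ∈ C¹([a,b];ℝ) with η(a) = η(b) = 0 such that (ᶜₐD^{α}_t η) and (ₐI^{β}_t η) are continuous on [a,b], one has ∫_a^b [ h₂(t)η(t) + h₃(t)η′(t) + h₄(t)(ᶜₐD^{α}_t η)(t) + h₅(t)(ₐI^{β}_t η)(t) ] dt = ∫_a^b η(t) [ h₂(t) − h₃′(t) + (ₜD^{α}_b h₄)(t) + (ₜI^{β}_b h₅)(t) ] dt. -/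

import Mathlib

open MeasureTheory

/-- Left Riemann–Liouville integral of variable order `β`. -/
noncomputable def leftRLint (a : ℝ) (β : ℝ → ℝ → ℝ) (y : ℝ → ℝ) (t : ℝ) : ℝ :=
  ∫ τ in a..t, (t - τ) ^ (β t τ - 1) / Real.Gamma (β t τ) * y τ

/-- Right Riemann–Liouville integral of variable order `β`. -/
noncomputable def rightRLint (b : ℝ) (β : ℝ → ℝ → ℝ) (g : ℝ → ℝ) (t : ℝ) : ℝ :=
  ∫ τ in t..b, (τ - t) ^ (β τ t - 1) / Real.Gamma (β τ t) * g τ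

/-- Right Riemann–Liouville integral of variable order `1 − α`. -/
noncomputable def rightRLint1m (b : ℝ) (α : ℝ → ℝ → ℝ) (g : ℝ → ℝ) (t : ℝ) : ℝ :=
  ∫ τ in t..b, (τ - t) ^ (-α τ t) / Real.Gamma (1 - α τ t) * g τ

/-- Left Caputo derivative of variable order `α` of a `C¹` function with derivative `η'`. -/
noncomputable def leftCaputo (a : ℝ) (α : ℝ → ℝ → ℝ) (η' : ℝ → ℝ) (t : ℝ) : ℝ :=
  ∫ τ in a..t, (t - τ) ^ (-α t τ) / Real.Gamma (1 - α t τ) * η' τ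

/-- Right Riemann–Liouville derivative of variable order `α`:
`(ₜD^α_b g)(t) = −(d/dt)(ₜI^{1−α}_b g)(t)`. -/
noncomputable def rightRLderiv (b : ℝ) (α : ℝ → ℝ → ℝ) (g : ℝ → ℝ) (t : ℝ) : ℝ :=
  -(deriv (rightRLint1m b α g) t)

lemma my_rpow_cases (x y : ℝ) : x ^ y =
    if x = 0 then (if y = 0 then 1 else 0)
    else if x < 0 then Real.exp (Real.log x * y) * Real.cos (y * Real.pi)
    else Real.exp (Real.log x * y) := by
  rcases lt_trichotomy x 0 with h | h | h
  · rw [if_neg h.ne, if_pos h, Real.rpow_def_of_neg h]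
  · subst h
    rw [if_pos rfl]
    by_cases hy : y = 0
    · simp [hy]
    · simp [Real.zero_rpow hy, hy]
  · rw [if_neg h.ne', if_neg (not_lt.2 h.le), Real.rpow_def_of_pos h]

lemma my_measurable_rpow : Measurable fun p : ℝ × ℝ => p.1 ^ p.2 := by
  have heq : (fun p : ℝ × ℝ => p.1 ^ p.2) = fun p : ℝ × ℝ =>
      if p.1 = 0 then (if p.2 = 0 then 1 else 0)
      else if p.1 < 0 then Real.exp (Real.log p.1 * p.2) * Real.cos (p.2 * Real.pi)
      else Real.exp (Real.log p.1 * p.2) := by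
    funext p; exact my_rpow_cases p.1 p.2
  rw [heq]
  refine Measurable.ite (measurableSet_eq_fun measurable_fst measurable_const) ?_ ?_
  · exact Measurable.ite (measurableSet_eq_fun measurable_snd measurable_const)
      measurable_const measurable_const
  · exact Measurable.ite (measurableSet_lt measurable_fst measurable_const)
      ((Real.measurable_exp.comp ((Real.measurable_log.comp measurable_fst).mul
        measurable_snd)).mul (Real.measurable_cos.comp (measurable_snd.mul measurable_const)))
      (Real.measurable_exp.comp ((Real.measurable_log.comp measurable_fst).mul measurable_snd))

lemma my_measurable_Gamma : Measurable Real.Gamma := by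
  have hS : (Set.range fun m : ℕ => -(m : ℝ)).Countable := Set.countable_range _
  refine measurable_of_restrict_of_restrict_compl hS.measurableSet ?_ ?_
  · have := hS.to_subtype
    exact measurable_of_countable _
  · refine Continuous.measurable (ContinuousOn.restrict ?_)
    intro x hx
    refine (Real.differentiableAt_Gamma fun m hm => hx ⟨m, hm.symm⟩).continuousAt.continuousWithinAt

lemma gamma_lower (u v : ℝ) (hu : 0 < u) (huv : u ≤ v) :
    ∃ c > 0, ∀ s ∈ Set.Icc u v, c ≤ Real.Gamma s := by
  have hcont : ContinuousOn Real.Gamma (Set.Icc u v) := by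
    intro x hx
    have hx0 : 0 < x := lt_of_lt_of_le hu hx.1
    refine (Real.differentiableAt_Gamma fun m hm => ?_).continuousAt.continuousWithinAt
    rw [hm] at hx0
    have : -(m : ℝ) ≤ 0 := neg_nonpos.mpr (by positivity)
    linarith
  obtain ⟨x₀, hx₀, hmin⟩ := isCompact_Icc.exists_isMinOn ⟨u, Set.left_mem_Icc.2 huv⟩ hcont
  exact ⟨Real.Gamma x₀, Real.Gamma_pos_of_pos (lt_of_lt_of_le hu hx₀.1), fun s hs => hmin hs⟩

lemma fubini_swap (a b : ℝ) (hab : a < b) (K : ℝ → ℝ → ℝ)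
    (hK : Measurable (Function.uncurry K)) (C γ : ℝ) (hγ1 : γ < 1)
    (hbd : ∀ t τ : ℝ, a ≤ τ → τ < t → t ≤ b → |K t τ| ≤ C * ((t - τ) ^ (-γ) + 1))
    (f g : ℝ → ℝ) (hf : ContinuousOn f (Set.Icc a b)) (hg : ContinuousOn g (Set.Icc a b)) :
    (∫ t in Set.Ioc a b, f t * ∫ τ in Set.Ioc a t, K t τ * g τ) =
      (∫ τ in Set.Ioc a b, g τ * ∫ t in Set.Ioc τ b, K t τ * f t) ∧
    IntegrableOn (fun τ => g τ * ∫ t in Set.Ioc τ b, K t τ * f t) (Set.Ioc a b) := by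
  set μ := volume.restrict (Set.Ioc a b) with hμ
  haveI hfin : IsFiniteMeasure μ :=
    ⟨by rw [hμ, Measure.restrict_apply_univ]; exact measure_Ioc_lt_top⟩
  obtain ⟨Mf, hMf⟩ := isCompact_Icc.exists_bound_of_continuousOn hf
  obtain ⟨Mg, hMg⟩ := isCompact_Icc.exists_bound_of_continuousOn hg
  set C' := max C 0 with hC'
  set D := (max Mf 0) * (max Mg 0) * C' with hD
  have hD0 : 0 ≤ D := by positivity
  set H : ℝ → ℝ → ℝ := fun t τ => if τ < t then f t * (K t τ * g τ) else 0 with hH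
  set G : ℝ → ℝ → ℝ := fun t τ =>
    Set.indicator (Set.Iio t) (fun τ => D * ((t - τ) ^ (-γ) + 1)) τ with hG
  -- product AE strong measurability
  have hsm : AEStronglyMeasurable (Function.uncurry H) (μ.prod μ) := by
    rw [hμ, Measure.prod_restrict]
    have hfc : ContinuousOn (fun p : ℝ × ℝ => f p.1) (Set.Ioc a b ×ˢ Set.Ioc a b) :=
      (hf.mono Set.Ioc_subset_Icc_self).comp continuous_fst.continuousOn fun p hp => hp.1
    have hgc : ContinuousOn (fun p : ℝ × ℝ => g p.2) (Set.Ioc a b ×ˢ Set.Ioc a b) :=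
      (hg.mono Set.Ioc_subset_Icc_self).comp continuous_snd.continuousOn fun p hp => hp.2
    have h1 : AEStronglyMeasurable (fun p : ℝ × ℝ => f p.1 * (K p.1 p.2 * g p.2))
        ((volume.prod volume).restrict (Set.Ioc a b ×ˢ Set.Ioc a b)) :=
      (hfc.aestronglyMeasurable (measurableSet_Ioc.prod measurableSet_Ioc)).mul
        ((hK.aestronglyMeasurable.restrict).mul
          (hgc.aestronglyMeasurable (measurableSet_Ioc.prod measurableSet_Ioc)))
    have hset : MeasurableSet {p : ℝ × ℝ | p.2 < p.1} :=
      measurableSet_lt measurable_snd measurable_fst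
    have heq : Function.uncurry H = Set.indicator {p : ℝ × ℝ | p.2 < p.1}
        (fun p => f p.1 * (K p.1 p.2 * g p.2)) := by
      funext p
      simp only [Function.uncurry, hH, Set.indicator_apply, Set.mem_setOf_eq]
    rw [heq]
    exact h1.indicator hset
  -- integrability of the singular kernel majorant
  have hJ : ∀ t : ℝ, IntegrableOn (fun τ => (t - τ) ^ (-γ)) (Set.Ioc a b) := by
    intro t
    have h1 : IntervalIntegrable (fun x : ℝ => x ^ (-γ)) volume (t - a) (t - b) :=
      intervalIntegral.intervalIntegrable_rpow' (by linarith)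
    have h2 := h1.comp_sub_left t
    simp only [sub_sub_cancel] at h2
    exact (intervalIntegrable_iff_integrableOn_Ioc_of_le hab.le).1 h2
  have hGint : ∀ t : ℝ, Integrable (G t) μ := by
    intro t
    have h1 : IntegrableOn (fun τ => (t - τ) ^ (-γ) + 1) (Set.Ioc a b) :=
      (hJ t).add (integrableOn_const measure_Ioc_lt_top.ne)
    exact (h1.const_mul D).indicator measurableSet_Iio
  -- pointwise bound
  have hHbound : ∀ t ∈ Set.Ioc a b, ∀ τ ∈ Set.Ioc a b, ‖H t τ‖ ≤ G t τ := by
    intro t ht τ hτ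
    by_cases h : τ < t
    · show _ ≤ Set.indicator (Set.Iio t) (fun τ => D * ((t - τ) ^ (-γ) + 1)) τ
      rw [Set.indicator_of_mem (Set.mem_Iio.2 h)]
      have hHeq : H t τ = f t * (K t τ * g τ) := by rw [hH]; simp [h]
      rw [hHeq]
      have hx : (0:ℝ) < t - τ := sub_pos.2 h
      have hpos : (0:ℝ) ≤ (t - τ) ^ (-γ) + 1 := by positivity
      have h2 : |K t τ| ≤ C' * ((t - τ) ^ (-γ) + 1) :=
        (hbd t τ hτ.1.le h ht.2).trans (mul_le_mul_of_nonneg_right (le_max_left _ _) hpos)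
      have hft : ‖f t‖ ≤ max Mf 0 :=
        le_trans (hMf t (Set.Ioc_subset_Icc_self ht)) (le_max_left _ _)
      have hgτ : ‖g τ‖ ≤ max Mg 0 :=
        le_trans (hMg τ (Set.Ioc_subset_Icc_self hτ)) (le_max_left _ _)
      have hKg : |K t τ| * ‖g τ‖ ≤ (C' * ((t - τ) ^ (-γ) + 1)) * (max Mg 0) :=
        mul_le_mul h2 hgτ (norm_nonneg _) (by positivity)
      calc ‖f t * (K t τ * g τ)‖ = ‖f t‖ * (|K t τ| * ‖g τ‖) := by
            rw [norm_mul, norm_mul, Real.norm_eq_abs (K t τ)]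
        _ ≤ (max Mf 0) * ((C' * ((t - τ) ^ (-γ) + 1)) * (max Mg 0)) :=
            mul_le_mul hft hKg (by positivity) (by positivity)
        _ = D * ((t - τ) ^ (-γ) + 1) := by rw [hD]; ring
    · have h1 : H t τ = 0 := by rw [hH]; simp [h]
      have h2 : G t τ = 0 :=
        Set.indicator_of_notMem (by simpa using h) _
      simp [h1, h2]
  -- integrability in τ for each t
  have hHint : ∀ t ∈ Set.Ioc a b, Integrable (H t) μ := by
    intro t ht
    have hsm1 : AEStronglyMeasurable (fun τ => f t * (K t τ * g τ)) μ :=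
      aestronglyMeasurable_const.mul ((hK.of_uncurry_left.aestronglyMeasurable).mul
        ((hg.mono Set.Ioc_subset_Icc_self).aestronglyMeasurable measurableSet_Ioc))
    have heq : H t = Set.indicator (Set.Iio t) (fun τ => f t * (K t τ * g τ)) := by
      funext τ; simp [hH, Set.indicator_apply]
    refine Integrable.mono' (hGint t) ?_ ?_
    · rw [heq]; exact hsm1.indicator measurableSet_Iio
    · filter_upwards [ae_restrict_mem measurableSet_Ioc] with τ hτ using hHbound t ht τ hτ
  have hIoo : ∀ t ∈ Set.Ioc a b, Set.Iio t ∩ Set.Ioc a b = Set.Ioo a t := by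
    intro t ht; ext τ
    constructor
    · rintro ⟨h1, h2, h3⟩; exact ⟨h2, h1⟩
    · rintro ⟨h1, h2⟩; exact ⟨h2, h1, le_trans h2.le ht.2⟩
  set B := D * ((b - a) ^ (1 - γ) / (1 - γ) + (b - a)) with hB
  have hval : ∀ t ∈ Set.Ioc a b, ∫ τ, G t τ ∂μ ≤ B := by
    intro t ht
    have hioo : Set.Ioo a t ⊆ Set.Ioc a b := fun τ hτ => ⟨hτ.1, hτ.2.le.trans ht.2⟩
    rw [hG, hμ]
    rw [integral_indicator measurableSet_Iio,
      Measure.restrict_restrict measurableSet_Iio, hIoo t ht]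
    have hrpow : ∫ τ in Set.Ioo a t, (t - τ) ^ (-γ) = (t - a) ^ (1 - γ) / (1 - γ) := by
      rw [setIntegral_congr_set Ioo_ae_eq_Ioc, ← intervalIntegral.integral_of_le ht.1.le,
        intervalIntegral.integral_comp_sub_left (fun x => x ^ (-γ)) t, sub_self,
        integral_rpow (Or.inl (by linarith)),
        Real.zero_rpow (by intro hcon; linarith : -γ + 1 ≠ 0)]
      rw [show -γ + 1 = 1 - γ by ring]
      ring
    have hconst : ∫ _τ in Set.Ioo a t, (1:ℝ) = t - a := by
      simp [Real.volume_Ioo, ENNReal.toReal_ofReal (sub_nonneg.2 ht.1.le), ht.1.le]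
    have hint1 : IntegrableOn (fun τ => (t - τ) ^ (-γ)) (Set.Ioo a t) := (hJ t).mono_set hioo
    have hsplit : ∫ τ in Set.Ioo a t, D * ((t - τ) ^ (-γ) + 1) =
        D * ((t - a) ^ (1 - γ) / (1 - γ) + (t - a)) := by
      rw [MeasureTheory.integral_const_mul]
      rw [integral_add hint1 (integrableOn_const measure_Ioo_lt_top.ne)]
      rw [hrpow, hconst]
    rw [hsplit, hB]
    have h1 : (t - a) ^ (1 - γ) ≤ (b - a) ^ (1 - γ) :=
      Real.rpow_le_rpow (sub_nonneg.2 ht.1.le) (by linarith [ht.2]) (by linarith)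
    gcongr <;> first | exact h1 | linarith [ht.2]
  -- integrability of the norm integrals
  have hnormint : Integrable (fun t => ∫ τ, ‖H t τ‖ ∂μ) μ := by
    refine Integrable.mono' (integrable_const B) hsm.norm.integral_prod_right' ?_
    filter_upwards [ae_restrict_mem measurableSet_Ioc] with t ht
    rw [Real.norm_eq_abs, abs_of_nonneg (integral_nonneg fun τ => norm_nonneg _)]
    calc ∫ τ, ‖H t τ‖ ∂μ ≤ ∫ τ, G t τ ∂μ := by
          refine integral_mono_ae (hHint t ht).norm (hGint t) ?_
          filter_upwards [ae_restrict_mem measurableSet_Ioc] with τ hτ using hHbound t ht τ hτ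
      _ ≤ B := hval t ht
  have hint : Integrable (Function.uncurry H) (μ.prod μ) := by
    rw [integrable_prod_iff hsm]
    exact ⟨by filter_upwards [ae_restrict_mem measurableSet_Ioc] with t ht using hHint t ht,
      hnormint⟩
  have hswap := integral_integral_swap hint
  -- rewrite the inner integrals
  have hL : ∀ t ∈ Set.Ioc a b, (∫ τ, H t τ ∂μ) = f t * ∫ τ in Set.Ioc a t, K t τ * g τ := by
    intro t ht
    have h1 : H t = Set.indicator (Set.Iio t) (fun τ => f t * (K t τ * g τ)) := by
      funext τ; simp [hH, Set.indicator_apply]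
    rw [h1, hμ, integral_indicator measurableSet_Iio,
      Measure.restrict_restrict measurableSet_Iio, hIoo t ht,
      setIntegral_congr_set Ioo_ae_eq_Ioc, MeasureTheory.integral_const_mul]
  have hR : ∀ τ ∈ Set.Ioc a b, (∫ t, H t τ ∂μ) = g τ * ∫ t in Set.Ioc τ b, K t τ * f t := by
    intro τ hτ
    have h1 : (fun t => H t τ) = Set.indicator (Set.Ioi τ) (fun t => f t * (K t τ * g τ)) := by
      funext t; simp [hH, Set.indicator_apply, Set.mem_Ioi]
    have h2 : Set.Ioi τ ∩ Set.Ioc a b = Set.Ioc τ b := by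
      ext t; constructor
      · rintro ⟨h1', h2', h3'⟩; exact ⟨h1', h3'⟩
      · rintro ⟨h1', h2'⟩; exact ⟨h1', hτ.1.trans h1', h2'⟩
    rw [h1, hμ, integral_indicator measurableSet_Ioi,
      Measure.restrict_restrict measurableSet_Ioi, h2]
    rw [setIntegral_congr_fun measurableSet_Ioc
      (show Set.EqOn (fun t => f t * (K t τ * g τ)) (fun t => g τ * (K t τ * f t)) _ from
        fun t _ => by ring)]
    rw [MeasureTheory.integral_const_mul]
  constructor
  · calc (∫ t in Set.Ioc a b, f t * ∫ τ in Set.Ioc a t, K t τ * g τ)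
        = ∫ t, (∫ τ, H t τ ∂μ) ∂μ :=
          (setIntegral_congr_fun measurableSet_Ioc fun t ht => (hL t ht)).symm
      _ = ∫ τ, (∫ t, H t τ ∂μ) ∂μ := hswap
      _ = ∫ τ in Set.Ioc a b, g τ * ∫ t in Set.Ioc τ b, K t τ * f t :=
          setIntegral_congr_fun measurableSet_Ioc fun τ hτ => hR τ hτ
  · refine (hint.integral_prod_right).congr ?_
    filter_upwards [ae_restrict_mem measurableSet_Ioc] with τ hτ using hR τ hτ

/-- First-variation rearrangement via classical and variable order fractional
integration by parts, using the boundary conditions `η(a) = η(b) = 0`. -/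
theorem first_variation_rearrangement (a b : ℝ) (hab : a < b) (n : ℕ) (hn : 2 ≤ n)
    (α β : ℝ → ℝ → ℝ)
    (hαm : Measurable (Function.uncurry α)) (hβm : Measurable (Function.uncurry β))
    (hα : ∀ t ∈ Set.Icc a b, ∀ τ ∈ Set.Icc a b, 0 < α t τ ∧ α t τ < 1 - 1 / (n : ℝ))
    (hβ : ∀ t ∈ Set.Icc a b, ∀ τ ∈ Set.Icc a b, 1 / (n : ℝ) < β t τ ∧ β t τ < 1)
    (h₂ h₅ : ℝ → ℝ)
    (h₂c : ContinuousOn h₂ (Set.Icc a b)) (h₅c : ContinuousOn h₅ (Set.Icc a b))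
    (h₃ : ℝ → ℝ) (h₃d : ∀ t ∈ Set.Icc a b, DifferentiableAt ℝ h₃ t)
    (h₃c : ContinuousOn (deriv h₃) (Set.Icc a b))
    (h₄ : ℝ → ℝ) (h₄c : ContinuousOn h₄ (Set.Icc a b))
    (h₄I : ∀ t ∈ Set.Icc a b, DifferentiableAt ℝ (rightRLint1m b α h₄) t)
    (h₄I' : ContinuousOn (deriv (rightRLint1m b α h₄)) (Set.Icc a b)) :
    ∀ η η' : ℝ → ℝ,
      (∀ t ∈ Set.Icc a b, HasDerivAt η (η' t) t) →
      ContinuousOn η' (Set.Icc a b) →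
      η a = 0 → η b = 0 →
      ContinuousOn (leftCaputo a α η') (Set.Icc a b) →
      ContinuousOn (leftRLint a β η) (Set.Icc a b) →
      (∫ t in a..b,
          (h₂ t * η t + h₃ t * η' t + h₄ t * leftCaputo a α η' t +
            h₅ t * leftRLint a β η t)) =
        ∫ t in a..b,
          η t * (h₂ t - deriv h₃ t + rightRLderiv b α h₄ t + rightRLint b β h₅ t) := by
  intro η η' hη hη'c hηa hηb hCapc hRLc
  have hle : a ≤ b := hab.le
  have hIcc : Set.uIcc a b = Set.Icc a b := Set.uIcc_of_le hle
  have hηc : ContinuousOn η (Set.Icc a b) := fun t ht =>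
    (hη t ht).continuousAt.continuousWithinAt
  have h2n : (2:ℝ) ≤ (n:ℝ) := by exact_mod_cast hn
  have hn0 : (0:ℝ) < 1 / (n:ℝ) := by positivity
  have hn1 : 1 / (n:ℝ) ≤ 1 := by rw [div_le_one (by linarith)]; linarith
  obtain ⟨γ, hγ⟩ : ∃ γ : ℝ, γ = 1 - 1/(n:ℝ) := ⟨_, rfl⟩
  have hγ1 : γ < 1 := by rw [hγ]; linarith
  obtain ⟨c, hc0, hc⟩ := gamma_lower (1/(n:ℝ)) 1 hn0 hn1
  have key : ∀ x e s : ℝ, 0 < x → -γ ≤ e → e ≤ 0 → 1/(n:ℝ) ≤ s → s ≤ 1 →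
      |x ^ e / Real.Gamma s| ≤ (1/c) * (x ^ (-γ) + 1) := by
    intro x e s hx he1 he2 hs1 hs2
    have hΓ : c ≤ Real.Gamma s := hc s ⟨hs1, hs2⟩
    have hΓ0 : 0 < Real.Gamma s := lt_of_lt_of_le hc0 hΓ
    have hxe : (0:ℝ) ≤ x ^ e := (Real.rpow_pos_of_pos hx e).le
    have hxγ : (0:ℝ) ≤ x ^ (-γ) := (Real.rpow_pos_of_pos hx _).le
    rw [abs_of_nonneg (div_nonneg hxe hΓ0.le)]
    have h1 : x ^ e ≤ x ^ (-γ) + 1 := by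
      rcases le_total x 1 with h | h
      · have := Real.rpow_le_rpow_of_exponent_ge hx h he1
        linarith
      · have h2 : x ^ e ≤ 1 := Real.rpow_le_one_of_one_le_of_nonpos h he2
        linarith
    calc x ^ e / Real.Gamma s ≤ (x ^ (-γ) + 1) / c := by
          apply div_le_div₀ (by positivity) h1 hc0 hΓ
      _ = (1/c) * (x ^ (-γ) + 1) := by ring
  set K₁ : ℝ → ℝ → ℝ := fun t τ => (t - τ) ^ (-α t τ) / Real.Gamma (1 - α t τ) with hK₁
  set K₂ : ℝ → ℝ → ℝ := fun t τ => (t - τ) ^ (β t τ - 1) / Real.Gamma (β t τ) with hK₂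
  have hK₁m : Measurable (Function.uncurry K₁) := by
    apply Measurable.div
    · exact my_measurable_rpow.comp ((measurable_fst.sub measurable_snd).prodMk hαm.neg)
    · exact my_measurable_Gamma.comp (measurable_const.sub hαm)
  have hK₂m : Measurable (Function.uncurry K₂) := by
    apply Measurable.div
    · exact my_measurable_rpow.comp
        ((measurable_fst.sub measurable_snd).prodMk (hβm.sub measurable_const))
    · exact my_measurable_Gamma.comp hβm
  have hbd₁ : ∀ t τ : ℝ, a ≤ τ → τ < t → t ≤ b → |K₁ t τ| ≤ (1/c) * ((t - τ) ^ (-γ) + 1) := by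
    intro t τ h1 h2 h3
    have hτmem : τ ∈ Set.Icc a b := ⟨h1, (h2.trans_le h3).le⟩
    have htmem : t ∈ Set.Icc a b := ⟨h1.trans h2.le, h3⟩
    obtain ⟨ha1, ha2⟩ := hα t htmem τ hτmem
    exact key _ _ _ (sub_pos.2 h2) (by rw [hγ]; linarith) (by linarith)
      (by linarith) (by linarith)
  have hbd₂ : ∀ t τ : ℝ, a ≤ τ → τ < t → t ≤ b → |K₂ t τ| ≤ (1/c) * ((t - τ) ^ (-γ) + 1) := by
    intro t τ h1 h2 h3
    have hτmem : τ ∈ Set.Icc a b := ⟨h1, (h2.trans_le h3).le⟩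
    have htmem : t ∈ Set.Icc a b := ⟨h1.trans h2.le, h3⟩
    obtain ⟨hb1, hb2⟩ := hβ t htmem τ hτmem
    exact key _ _ _ (sub_pos.2 h2) (by rw [hγ]; linarith) (by linarith)
      (by linarith) (by linarith)
  obtain ⟨eqA, intA⟩ := fubini_swap a b hab K₁ hK₁m (1/c) γ hγ1 hbd₁ h₄ η' h₄c hη'c
  obtain ⟨eqB, intB⟩ := fubini_swap a b hab K₂ hK₂m (1/c) γ hγ1 hbd₂ h₅ η h₅c hηc
  -- continuity of h₃
  have h₃cont : ContinuousOn h₃ (Set.Icc a b) := fun t ht =>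
    (h₃d t ht).continuousAt.continuousWithinAt
  -- Term 2 : classical integration by parts
  have hT2 : (∫ t in a..b, h₃ t * η' t) = ∫ t in a..b, η t * (-(deriv h₃ t)) := by
    rw [intervalIntegral.integral_mul_deriv_eq_deriv_mul
      (u := h₃) (u' := deriv h₃) (v := η) (v' := η')
      (fun x hx => (h₃d x (hIcc ▸ hx)).hasDerivAt)
      (fun x hx => hη x (hIcc ▸ hx))
      (ContinuousOn.intervalIntegrable (by rw [hIcc]; exact h₃c))
      (ContinuousOn.intervalIntegrable (by rw [hIcc]; exact hη'c))]
    rw [hηa, hηb]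
    rw [mul_zero, mul_zero, sub_zero, zero_sub, ← intervalIntegral.integral_neg]
    exact intervalIntegral.integral_congr fun x _ => by ring
  -- Term 3 : Caputo term
  have hCap : ∀ t ∈ Set.Ioc a b, leftCaputo a α η' t = ∫ τ in Set.Ioc a t, K₁ t τ * η' τ := by
    intro t ht
    unfold leftCaputo
    rw [intervalIntegral.integral_of_le ht.1.le]
  have hI1 : ∀ τ ∈ Set.Ioc a b,
      (∫ t in Set.Ioc τ b, K₁ t τ * h₄ t) = rightRLint1m b α h₄ τ := by
    intro τ hτ
    unfold rightRLint1m
    rw [intervalIntegral.integral_of_le hτ.2]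
  have hT3 : (∫ t in a..b, h₄ t * leftCaputo a α η' t)
      = ∫ t in a..b, η t * rightRLderiv b α h₄ t := by
    have e0 : (∫ t in a..b, h₄ t * leftCaputo a α η' t)
        = ∫ t in Set.Ioc a b, h₄ t * ∫ τ in Set.Ioc a t, K₁ t τ * η' τ := by
      rw [intervalIntegral.integral_of_le hle]
      exact setIntegral_congr_fun measurableSet_Ioc fun t ht => by rw [hCap t ht]
    have e1 : (∫ τ in Set.Ioc a b, η' τ * ∫ t in Set.Ioc τ b, K₁ t τ * h₄ t)
        = ∫ τ in a..b, rightRLint1m b α h₄ τ * η' τ := by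
      rw [intervalIntegral.integral_of_le hle]
      exact setIntegral_congr_fun measurableSet_Ioc fun τ hτ => by rw [hI1 τ hτ, mul_comm]
    rw [e0, eqA, e1]
    rw [intervalIntegral.integral_mul_deriv_eq_deriv_mul
      (u := rightRLint1m b α h₄) (u' := deriv (rightRLint1m b α h₄)) (v := η) (v' := η')
      (fun x hx => (h₄I x (hIcc ▸ hx)).hasDerivAt)
      (fun x hx => hη x (hIcc ▸ hx))
      (ContinuousOn.intervalIntegrable (by rw [hIcc]; exact h₄I'))
      (ContinuousOn.intervalIntegrable (by rw [hIcc]; exact hη'c))]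
    rw [hηa, hηb]
    rw [mul_zero, mul_zero, sub_zero, zero_sub, ← intervalIntegral.integral_neg]
    refine intervalIntegral.integral_congr fun x _ => ?_
    show -(deriv (rightRLint1m b α h₄) x * η x) = η x * rightRLderiv b α h₄ x
    unfold rightRLderiv
    ring
  -- Term 4 : Riemann–Liouville term
  have hRL : ∀ t ∈ Set.Ioc a b, leftRLint a β η t = ∫ τ in Set.Ioc a t, K₂ t τ * η τ := by
    intro t ht
    unfold leftRLint
    rw [intervalIntegral.integral_of_le ht.1.le]
  have hI2 : ∀ τ ∈ Set.Ioc a b,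
      (∫ t in Set.Ioc τ b, K₂ t τ * h₅ t) = rightRLint b β h₅ τ := by
    intro τ hτ
    unfold rightRLint
    rw [intervalIntegral.integral_of_le hτ.2]
  have hT4 : (∫ t in a..b, h₅ t * leftRLint a β η t)
      = ∫ τ in a..b, η τ * rightRLint b β h₅ τ := by
    have e0 : (∫ t in a..b, h₅ t * leftRLint a β η t)
        = ∫ t in Set.Ioc a b, h₅ t * ∫ τ in Set.Ioc a t, K₂ t τ * η τ := by
      rw [intervalIntegral.integral_of_le hle]
      exact setIntegral_congr_fun measurableSet_Ioc fun t ht => by rw [hRL t ht]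
    rw [e0, eqB, intervalIntegral.integral_of_le hle]
    exact setIntegral_congr_fun measurableSet_Ioc fun τ hτ => by rw [hI2 τ hτ]
  have hT4int : IntervalIntegrable (fun τ => η τ * rightRLint b β h₅ τ) volume a b := by
    rw [intervalIntegrable_iff_integrableOn_Ioc_of_le hle]
    refine intB.congr ?_
    filter_upwards [ae_restrict_mem measurableSet_Ioc] with τ hτ using by rw [hI2 τ hτ]
  --整合
  have iA : IntervalIntegrable (fun t => h₂ t * η t) volume a b :=
    ContinuousOn.intervalIntegrable (by rw [hIcc]; exact h₂c.mul hηc)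
  have iB : IntervalIntegrable (fun t => h₃ t * η' t) volume a b :=
    ContinuousOn.intervalIntegrable (by rw [hIcc]; exact h₃cont.mul hη'c)
  have iC : IntervalIntegrable (fun t => h₄ t * leftCaputo a α η' t) volume a b :=
    ContinuousOn.intervalIntegrable (by rw [hIcc]; exact h₄c.mul hCapc)
  have iD : IntervalIntegrable (fun t => h₅ t * leftRLint a β η t) volume a b :=
    ContinuousOn.intervalIntegrable (by rw [hIcc]; exact h₅c.mul hRLc)
  have jA : IntervalIntegrable (fun t => η t * h₂ t) volume a b :=
    ContinuousOn.intervalIntegrable (by rw [hIcc]; exact hηc.mul h₂c)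
  have jB : IntervalIntegrable (fun t => η t * (-(deriv h₃ t))) volume a b :=
    ContinuousOn.intervalIntegrable (by rw [hIcc]; exact hηc.mul h₃c.neg)
  have hDc : ContinuousOn (rightRLderiv b α h₄) (Set.Icc a b) := by
    unfold rightRLderiv; exact h₄I'.neg
  have jC : IntervalIntegrable (fun t => η t * rightRLderiv b α h₄ t) volume a b :=
    ContinuousOn.intervalIntegrable (by rw [hIcc]; exact hηc.mul hDc)
  have hT1 : (∫ t in a..b, h₂ t * η t) = ∫ t in a..b, η t * h₂ t :=
    intervalIntegral.integral_congr fun x _ => mul_comm _ _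
  have hRHS : (∫ t in a..b,
        η t * (h₂ t - deriv h₃ t + rightRLderiv b α h₄ t + rightRLint b β h₅ t))
      = (∫ t in a..b, η t * h₂ t) + (∫ t in a..b, η t * (-(deriv h₃ t)))
        + (∫ t in a..b, η t * rightRLderiv b α h₄ t)
        + (∫ t in a..b, η t * rightRLint b β h₅ t) := by
    rw [← intervalIntegral.integral_add jA jB,
      ← intervalIntegral.integral_add (jA.add jB) jC,
      ← intervalIntegral.integral_add ((jA.add jB).add jC) hT4int]
    exact intervalIntegral.integral_congr fun x _ => by ring
  rw [intervalIntegral.integral_add ((iA.add iB).add iC) iD,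
    intervalIntegral.integral_add (iA.add iB) iC,
    intervalIntegral.integral_add iA iB, hRHS, hT1, hT2, hT3, hT4]
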